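/- arXiv:2110.03580 — 2 statements merged into one kernel-verified Lean document; each statement's English description precedes it below -/
import Mathlib

section
/- Let β₁, β₂, β₃, θ, L_w ≥ 0 with β₃ ≥ 10·√(β₁ · L_w), let p ∈ [0,1] and m ≥ 0, and define R(n, θ) = √(β₁ · n) + β₂·θ + β₃ for n ≥ 0. If N is a real number satisfying (3/4)·p·m − 21·L_w ≤ N and N ≤ (5/4)·p·m + 21·L_w and N ≥ 0, then (1/2)·R(p·m, θ) ≤ R(N, θ) ≤ (3/2)·R(p·m, θ). -/
set_option maxHeartbeats 1000000


theorem stmt_10 (β₁ β₂ β₃ θ Lw p m N : ℝ)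
    (hβ₁ : 0 ≤ β₁) (hβ₂ : 0 ≤ β₂) (hβ₃ : 0 ≤ β₃) (hθ : 0 ≤ θ) (hLw : 0 ≤ Lw)
    (hβ₃' : 10 * Real.sqrt (β₁ * Lw) ≤ β₃)
    (hp0 : 0 ≤ p) (hp1 : p ≤ 1) (hm : 0 ≤ m)
    (hN1 : (3 / 4) * p * m - 21 * Lw ≤ N)
    (hN2 : N ≤ (5 / 4) * p * m + 21 * Lw) (hN0 : 0 ≤ N) :
    (1 / 2) * (Real.sqrt (β₁ * (p * m)) + β₂ * θ + β₃) ≤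
        Real.sqrt (β₁ * N) + β₂ * θ + β₃ ∧
      Real.sqrt (β₁ * N) + β₂ * θ + β₃ ≤
        (3 / 2) * (Real.sqrt (β₁ * (p * m)) + β₂ * θ + β₃) := by
  have hpm : 0 ≤ p * m := mul_nonneg hp0 hm
  set s := Real.sqrt (β₁ * (p * m)) with hs
  set t := Real.sqrt (β₁ * N) with ht
  set u := Real.sqrt (β₁ * Lw) with hu
  have hs0 : 0 ≤ s := Real.sqrt_nonneg _
  have ht0 : 0 ≤ t := Real.sqrt_nonneg _
  have hu0 : 0 ≤ u := Real.sqrt_nonneg _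
  have hs2 : s ^ 2 = β₁ * (p * m) := Real.sq_sqrt (mul_nonneg hβ₁ hpm)
  have ht2 : t ^ 2 = β₁ * N := Real.sq_sqrt (mul_nonneg hβ₁ hN0)
  have hu2 : u ^ 2 = β₁ * Lw := Real.sq_sqrt (mul_nonneg hβ₁ hLw)
  have h1 : β₁ * N ≤ β₁ * ((5 / 4) * p * m + 21 * Lw) :=
    mul_le_mul_of_nonneg_left hN2 hβ₁
  have h2 : β₁ * ((3 / 4) * p * m - 21 * Lw) ≤ β₁ * N :=
    mul_le_mul_of_nonneg_left hN1 hβ₁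
  have ht2le : t ^ 2 ≤ 5 / 4 * s ^ 2 + 21 * u ^ 2 := by
    rw [hs2, ht2, hu2]; nlinarith
  have hs2le : s ^ 2 ≤ 4 / 3 * t ^ 2 + 28 * u ^ 2 := by
    rw [hs2, ht2, hu2]; nlinarith
  have hupper : t ≤ 3 / 2 * s + 5 * u := by
    nlinarith [sq_nonneg (t - (3 / 2 * s + 5 * u)), mul_nonneg hs0 hu0,
      mul_nonneg ht0 hs0, mul_nonneg ht0 hu0]
  have hlower : s ≤ 2 * t + 10 * u := by
    nlinarith [sq_nonneg (s - (2 * t + 10 * u)), mul_nonneg hs0 hu0,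
      mul_nonneg ht0 hs0, mul_nonneg ht0 hu0]
  have hbt : 0 ≤ β₂ * θ := mul_nonneg hβ₂ hθ
  constructor <;> linarith
end

section
/- Let α ∈ [0,1], t ≥ 0, L ≥ 0, c_max ≥ 0 be reals, and let c_1, ..., c_n be reals with 0 ≤ c_τ ≤ c_max and n ≤ t. Suppose N and S are reals with 0 ≤ N ≤ (5/4)·α·t + 21·L and 0 ≤ S ≤ (5/4)·α·∑_τ c_τ² + 21·c_max²·L. Then √(N·S) ≤ (5/4)·α·√(t·∑_τ c_τ²) + 8·c_max·√(α·t·L) + 21·c_max·L. -/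
theorem stmt_11 (α t L cmax : ℝ) (hα0 : 0 ≤ α) (hα1 : α ≤ 1)
    (ht : 0 ≤ t) (hL : 0 ≤ L) (hcmax : 0 ≤ cmax)
    (n : ℕ) (c : Fin n → ℝ) (hc0 : ∀ τ, 0 ≤ c τ) (hcb : ∀ τ, c τ ≤ cmax)
    (hn : (n : ℝ) ≤ t) (N S : ℝ) (hN0 : 0 ≤ N) (hS0 : 0 ≤ S)
    (hN : N ≤ (5 / 4) * α * t + 21 * L)
    (hS : S ≤ (5 / 4) * α * (∑ τ, (c τ) ^ 2) + 21 * cmax ^ 2 * L) :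
    Real.sqrt (N * S) ≤
      (5 / 4) * α * Real.sqrt (t * ∑ τ, (c τ) ^ 2) +
        8 * cmax * Real.sqrt (α * t * L) + 21 * cmax * L := by
  set s : ℝ := ∑ τ, (c τ) ^ 2 with hs
  have hs0 : 0 ≤ s := Finset.sum_nonneg fun τ _ => sq_nonneg _
  have hsb : s ≤ cmax ^ 2 * t := by
    have h1 : s ≤ ∑ _τ : Fin n, cmax ^ 2 :=
      Finset.sum_le_sum fun τ _ => pow_le_pow_left₀ (hc0 τ) (hcb τ) 2
    have h2 : (∑ _τ : Fin n, cmax ^ 2) = (n : ℝ) * cmax ^ 2 := by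
      simp [Finset.sum_const, mul_comm]
    nlinarith [sq_nonneg cmax]
  have key : ∀ x y : ℝ, 0 ≤ x → 0 ≤ y →
      Real.sqrt (x + y) ≤ Real.sqrt x + Real.sqrt y := by
    intro x y hx hy
    have h := Real.sqrt_le_sqrt (show x + y ≤ (Real.sqrt x + Real.sqrt y) ^ 2 by
      nlinarith [Real.sq_sqrt hx, Real.sq_sqrt hy, Real.sqrt_nonneg x, Real.sqrt_nonneg y])
    calc Real.sqrt (x + y) ≤ Real.sqrt ((Real.sqrt x + Real.sqrt y) ^ 2) := h
      _ = Real.sqrt x + Real.sqrt y :=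
        Real.sqrt_sq (by positivity)
  have hX : 0 ≤ ((5/4) * α) ^ 2 * (t * s) := by positivity
  have hY : 0 ≤ 64 * cmax ^ 2 * (α * t * L) := by positivity
  have hZ : 0 ≤ (21 * cmax * L) ^ 2 := sq_nonneg _
  have hNS : N * S ≤ ((5/4) * α) ^ 2 * (t * s) + 64 * cmax ^ 2 * (α * t * L)
      + (21 * cmax * L) ^ 2 := by
    have h1 : N * S ≤ ((5/4) * α * t + 21 * L) * ((5/4) * α * s + 21 * cmax ^ 2 * L) :=
      mul_le_mul hN hS hS0 (by positivity)
    have h2 : ((5/4) * α * t + 21 * L) * ((5/4) * α * s + 21 * cmax ^ 2 * L)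
        ≤ ((5/4) * α) ^ 2 * (t * s) + 64 * cmax ^ 2 * (α * t * L) + (21 * cmax * L) ^ 2 := by
      nlinarith [mul_nonneg (mul_nonneg hα0 hL) (sub_nonneg.2 hsb),
        mul_nonneg (mul_nonneg (mul_nonneg hα0 ht) hL) (sq_nonneg cmax)]
    linarith
  calc Real.sqrt (N * S)
      ≤ Real.sqrt (((5/4) * α) ^ 2 * (t * s) + 64 * cmax ^ 2 * (α * t * L)
          + (21 * cmax * L) ^ 2) := Real.sqrt_le_sqrt hNS
    _ ≤ Real.sqrt (((5/4) * α) ^ 2 * (t * s) + 64 * cmax ^ 2 * (α * t * L))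
          + Real.sqrt ((21 * cmax * L) ^ 2) := key _ _ (by positivity) hZ
    _ ≤ Real.sqrt (((5/4) * α) ^ 2 * (t * s)) + Real.sqrt (64 * cmax ^ 2 * (α * t * L))
          + Real.sqrt ((21 * cmax * L) ^ 2) := by
        have := key _ _ hX hY
        linarith
    _ = (5/4) * α * Real.sqrt (t * s) + 8 * cmax * Real.sqrt (α * t * L)
          + 21 * cmax * L := by
        rw [show (64 : ℝ) * cmax ^ 2 = (8 * cmax) ^ 2 by ring,
          Real.sqrt_mul (sq_nonneg _), Real.sqrt_mul (sq_nonneg _),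
          Real.sqrt_sq (by positivity : (0:ℝ) ≤ (5/4) * α),
          Real.sqrt_sq (by positivity : (0:ℝ) ≤ 8 * cmax),
          Real.sqrt_sq (by positivity : (0:ℝ) ≤ 21 * cmax * L)]
end
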